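/- For every u ∈ (0, π) one has d₀⁰(u) + d₂⁰(u) < 0, i.e. (1/2)·(−2u³ − sin u·(−2u³·sin u + u·sin³ u + cos u·(−3u² + sin² u))) < 0. -/

import Mathlib

open Set Real

/-- Taylor lower bound for `sin`: `x - x^3/6 ≤ sin x` for `0 ≤ x`. -/
lemma sin_taylor_lb (x : ℝ) (hx : 0 ≤ x) : x - x ^ 3 / 6 ≤ Real.sin x := by
  have key : ∀ y : ℝ, HasDerivAt (fun t => Real.sin t - (t - t ^ 3 / 6))
      (Real.cos y - (1 - y ^ 2 / 2)) y := by
    intro y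
    have h1 := Real.hasDerivAt_sin y
    have h2 : HasDerivAt (fun t : ℝ => t - t ^ 3 / 6) (1 - 3 * y ^ 2 / 6) y := by
      exact ((hasDerivAt_id y).sub ((hasDerivAt_pow 3 y).div_const 6)).congr_deriv (by norm_num)
    exact (h1.sub h2).congr_deriv (by ring)
  have mono : MonotoneOn (fun t => Real.sin t - (t - t ^ 3 / 6)) (Set.Ici 0) := by
    apply monotoneOn_of_deriv_nonneg (convex_Ici 0)
    · exact (Real.continuous_sin.sub (by continuity)).continuousOn
    · intro y _
      exact (key y).differentiableAt.differentiableWithinAt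
    · intro y _
      rw [(key y).deriv]
      have := Real.one_sub_sq_div_two_le_cos (x := y)
      linarith
  have h0 := mono Set.self_mem_Ici hx hx
  simp only [Real.sin_zero] at h0
  norm_num at h0
  linarith

/-- Taylor upper bound for `cos`: `cos x ≤ 1 - x^2/2 + x^4/24` for `0 ≤ x`. -/
lemma cos_taylor_ub (x : ℝ) (hx : 0 ≤ x) : Real.cos x ≤ 1 - x ^ 2 / 2 + x ^ 4 / 24 := by
  have key : ∀ y : ℝ, HasDerivAt (fun t => (1 - t ^ 2 / 2 + t ^ 4 / 24) - Real.cos t)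
      ((Real.sin y - (y - y ^ 3 / 6))) y := by
    intro y
    have h1 := Real.hasDerivAt_cos y
    have h2 : HasDerivAt (fun t : ℝ => 1 - t ^ 2 / 2 + t ^ 4 / 24)
        (-y + 4 * y ^ 3 / 24) y := by
      have ha : HasDerivAt (fun t : ℝ => 1 - t ^ 2 / 2) (-y) y := by
        simpa using ((hasDerivAt_pow 2 y).div_const 2).const_sub 1
      have hb := ha.add ((hasDerivAt_pow 4 y).div_const 24)
      exact hb.congr_deriv (by norm_num)
    exact (h2.sub h1).congr_deriv (by ring)
  have mono : MonotoneOn (fun t => (1 - t ^ 2 / 2 + t ^ 4 / 24) - Real.cos t) (Set.Ici 0) := by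
    apply monotoneOn_of_deriv_nonneg (convex_Ici 0)
    · exact ((by continuity : Continuous fun t : ℝ => 1 - t ^ 2 / 2 + t ^ 4 / 24).sub
        Real.continuous_cos).continuousOn
    · intro y _
      exact (key y).differentiableAt.differentiableWithinAt
    · intro y hy
      rw [(key y).deriv]
      rw [interior_Ici] at hy
      have := sin_taylor_lb y (le_of_lt hy)
      linarith
  have h0 := mono Set.self_mem_Ici hx hx
  simp only [Real.cos_zero] at h0
  norm_num at h0
  linarith

set_option maxHeartbeats 800000 in
/-- Lemma: `d₀⁰(u) + d₂⁰(u) < 0` for `u ∈ (0, π)`. -/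
theorem d00_add_d20_neg :
    ∀ u ∈ Ioo 0 π,
      (1/2) * (-2 * u ^ 3 - sin u * (-2 * u ^ 3 * sin u + u * sin u ^ 3
        + cos u * (-3 * u ^ 2 + sin u ^ 2))) < 0 := by
  intro u hu
  obtain ⟨hu0, hupi⟩ := hu
  have hsc : sin u ^ 2 + cos u ^ 2 = 1 := sin_sq_add_cos_sq u
  have hs0 : 0 < sin u := sin_pos_of_pos_of_lt_pi hu0 hupi
  have hpi_lt : π < 3.141593 := pi_lt_d6
  have hpi_gt : 3.141592 < π := pi_gt_d6
  -- First factor: sin u - u * cos u > 0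
  have hf1 : 0 < sin u - u * cos u := by
    rcases le_or_gt u (π / 2) with h | h
    · have hub := cos_taylor_ub u hu0.le
      have hlb := sin_taylor_lb u hu0.le
      have hu2 : u ≤ 1.5708 := by linarith
      have h8 : 0 < u ^ 3 * (8 - u ^ 2) := by
        apply mul_pos (pow_pos hu0 3)
        nlinarith
      have e := mul_le_mul_of_nonneg_left hub hu0.le
      linarith [e, h8, hlb]
    · have hc : cos u < 0 := cos_neg_of_pi_div_two_lt_of_lt h (by linarith)
      nlinarith [mul_pos hu0 (neg_pos.2 hc)]
  -- Second factor
  have hf2 : 0 < u * sin u + cos u * (sin u ^ 2 - 2 * u ^ 2) := by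
    rcases le_or_gt u (π / 2) with h | h
    · have hc0 : 0 ≤ cos u := cos_nonneg_of_mem_Icc ⟨by linarith, h⟩
      have hub := cos_taylor_ub u hu0.le
      have hlb := sin_taylor_lb u hu0.le
      have hu2 : u ≤ 1.5708 := by linarith
      have hsl0 : 0 ≤ u - u ^ 3 / 6 := by nlinarith
      have e0 : 0 ≤ u * (sin u - (u - u ^ 3 / 6)) :=
        mul_nonneg hu0.le (by linarith)
      have e1 : 0 ≤ cos u * ((sin u - (u - u ^ 3 / 6)) * (sin u + (u - u ^ 3 / 6))) :=
        mul_nonneg hc0 (mul_nonneg (by linarith) (by linarith))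
      have h2u : 0 ≤ 2 * u ^ 2 - (u - u ^ 3 / 6) ^ 2 := by
        nlinarith [mul_nonneg (show (0:ℝ) ≤ u ^ 3 / 6 by positivity)
          (show (0:ℝ) ≤ 2 * u - u ^ 3 / 6 by nlinarith)]
      have e2 : 0 ≤ (1 - u ^ 2 / 2 + u ^ 4 / 24 - cos u) * (2 * u ^ 2 - (u - u ^ 3 / 6) ^ 2) :=
        mul_nonneg (by linarith) h2u
      have hP : 0 < u * (u - u ^ 3 / 6) + (1 - u ^ 2 / 2 + u ^ 4 / 24) *
          ((u - u ^ 3 / 6) ^ 2 - 2 * u ^ 2) := by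
        have h6 : 0 < u ^ 6 * (132 - 24 * u ^ 2 + u ^ 4) :=
          mul_pos (pow_pos hu0 6) (by nlinarith)
        have hid2 : u * (u - u ^ 3 / 6) + (1 - u ^ 2 / 2 + u ^ 4 / 24) *
            ((u - u ^ 3 / 6) ^ 2 - 2 * u ^ 2) = u ^ 6 * (132 - 24 * u ^ 2 + u ^ 4) / 864 := by
          ring
        rw [hid2]
        linarith [h6]
      linarith [e0, e1, e2, hP]
    · have hc : cos u ≤ 0 := cos_nonpos_of_pi_div_two_le_of_le h.le (by linarith)
      have hs1 : sin u ≤ 1 := sin_le_one u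
      have h2u : (0:ℝ) ≤ 2 * u ^ 2 - sin u ^ 2 := by nlinarith
      have hterm := mul_nonneg (neg_nonneg.2 hc) h2u
      linarith [mul_pos hu0 hs0, hterm]
  have hid : (1/2) * (-2 * u ^ 3 - sin u * (-2 * u ^ 3 * sin u + u * sin u ^ 3
        + cos u * (-3 * u ^ 2 + sin u ^ 2)))
      = -(1/2) * ((sin u - u * cos u) * (u * sin u + cos u * (sin u ^ 2 - 2 * u ^ 2)))
        - (1/2) * (sin u ^ 2 + cos u ^ 2 - 1) * (u * sin u ^ 2 - 2 * u ^ 3) := by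
    ring
  rw [hid, hsc]
  have hprod := mul_pos hf1 hf2
  linarith [hprod]
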